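/- Let G be connected and let S be a minimum balanced separator of G. Then for every contraction order π there exists a set C of at least |S| vertices that forms a clique in G*π, together with a set W of at least n/3 vertices, such that for every v ∈ W every vertex of C lies in the search space SS(v) in G^∧π (and consequently every arc of G^∧π between two vertices of C lies in SS(v)). -/

import Mathlib

open SimpleGraph
open scoped ENNReal

variable {V : Type*}

/-- One step of vertex contraction: remove `v` from the current graph and add an edge
between every pair of its current neighbors. -/
def chStep (H : SimpleGraph V) (v : V) : SimpleGraph V where
  Adj a b := a ≠ b ∧ a ≠ v ∧ b ≠ v ∧ (H.Adj a b ∨ (H.Adj v a ∧ H.Adj v b))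
  symm := ⟨by
    rintro a b ⟨h1, h2, h3, h4⟩
    refine ⟨h1.symm, h3, h2, ?_⟩
    rcases h4 with h | ⟨ha, hb⟩
    · exact Or.inl h.symm
    · exact Or.inr ⟨hb, ha⟩⟩
  loopless := ⟨fun a h => h.1 rfl⟩

/-- All edges ever present while contracting the vertices of the list in order:
the edges of the initial graph together with all added shortcuts. -/
def chList : SimpleGraph V → List V → SimpleGraph V
  | H, [] => H
  | H, v :: l => H ⊔ chList (chStep H v) l

/-- The rank of a vertex with respect to the contraction order `π`. -/
def rk {n : ℕ} (π : Fin n ≃ V) (v : V) : ℕ := (π.symm v : ℕ)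

/-- The contraction hierarchy `G*π`: contract `π 0, π 1, …` in this order and collect
all original edges and all added shortcuts. -/
def chGraph {n : ℕ} (G : SimpleGraph V) (π : Fin n ≃ V) : SimpleGraph V :=
  chList G ((List.finRange n).map ⇑π)

/-- A list of vertices is up-down w.r.t. a rank function: ranks strictly increase
along a prefix and strictly decrease along the remaining suffix, the two parts
meeting at the maximum-rank vertex. -/
def IsUpDown (r : V → ℕ) (l : List V) : Prop :=
  ∃ l₁ x l₂, l = l₁ ++ x :: l₂ ∧
    List.Chain' (fun a b => r a < r b) (l₁ ++ [x]) ∧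
    List.Chain' (fun a b => r b < r a) (x :: l₂)

/-- Reachability in the upward directed graph `G^∧π` (edges of `G*π` directed from
lower to higher rank): the vertex set of the search space `SS v`. -/
def UpReach {n : ℕ} (G : SimpleGraph V) (π : Fin n ≃ V) (v u : V) : Prop :=
  Relation.ReflTransGen (fun a b => (chGraph G π).Adj a b ∧ rk π a < rk π b) v u

/-- Length of a walk: the sum of the weights of its edges. -/
noncomputable def wlen {H : SimpleGraph V} (m : V → V → ℝ≥0∞) {s t : V}
    (p : H.Walk s t) : ℝ≥0∞ :=
  (p.darts.map (fun d => m d.toProd.1 d.toProd.2)).sum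

/-- Shortest path distance in a graph `H` under edge weights `m`. -/
noncomputable def gdist (H : SimpleGraph V) (m : V → V → ℝ≥0∞) (s t : V) : ℝ≥0∞ :=
  ⨅ (p : H.Walk s t), wlen m p

/-- Minimum length of an up-down `s`-`t` path in `G*π`. -/
noncomputable def updist {n : ℕ} (G : SimpleGraph V) (π : Fin n ≃ V)
    (m : V → V → ℝ≥0∞) (s t : V) : ℝ≥0∞ :=
  ⨅ (p : (chGraph G π).Walk s t) (_ : IsUpDown (rk π) p.support), wlen m p

/-- Minimum length of a strictly rank-increasing `u`-`v` path in `G*π`. -/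
noncomputable def upOnlyDist {n : ℕ} (G : SimpleGraph V) (π : Fin n ≃ V)
    (m : V → V → ℝ≥0∞) (u v : V) : ℝ≥0∞ :=
  ⨅ (p : (chGraph G π).Walk u v)
    (_ : List.Chain' (fun a b => rk π a < rk π b) p.support), wlen m p

/-- `S` is a balanced separator of the subgraph of `G` induced by `U`. -/
def IsBalancedSepOn [DecidableEq V] (G : SimpleGraph V) (U S : Finset V) : Prop :=
  S ⊆ U ∧ ∃ A B : Finset V, A ⊆ U ∧ B ⊆ U ∧
    Disjoint A B ∧ Disjoint A S ∧ Disjoint B S ∧ A ∪ B ∪ S = U ∧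
    (∀ a ∈ A, ∀ b ∈ B, ¬ G.Adj a b) ∧
    3 * A.card ≤ 2 * U.card ∧ 3 * B.card ≤ 2 * U.card

/-- Nested dissection orders (as lists, earliest contracted first, separator last)
of induced subgraphs of `G`, in which the separator chosen at every recursion step on
a `k`-vertex subgraph is balanced and has cardinality at most `c * k ^ α`. -/
inductive IsNDOrder [DecidableEq V] (G : SimpleGraph V) (c α : ℝ) : Finset V → List V → Prop
  | empty : IsNDOrder G c α ∅ []
  | step {U S A B : Finset V} {lA lB lS : List V} :
      Disjoint A B → Disjoint A S → Disjoint B S → A ∪ B ∪ S = U →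
      (∀ a ∈ A, ∀ b ∈ B, ¬ G.Adj a b) →
      3 * A.card ≤ 2 * U.card → 3 * B.card ≤ 2 * U.card →
      ((S.card : ℝ) ≤ c * (U.card : ℝ) ^ α) →
      lS.Nodup → lS.toFinset = S →
      IsNDOrder G c α A lA → IsNDOrder G c α B lB →
      IsNDOrder G c α U (lA ++ lB ++ lS)

/-- Number of vertices of the search space `SS v` in `G^∧π`. -/
noncomputable def nVertsSS {n : ℕ} (G : SimpleGraph V) (π : Fin n ≃ V) (v : V) : ℕ :=
  {u | UpReach G π v u}.ncard

/-- Number of arcs of the search space `SS v` in `G^∧π`: arcs of `G^∧π` with both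
endpoints reachable from `v`. -/
noncomputable def nArcsSS {n : ℕ} (G : SimpleGraph V) (π : Fin n ≃ V) (v : V) : ℕ :=
  {q : V × V | (chGraph G π).Adj q.1 q.2 ∧ rk π q.1 < rk π q.2 ∧
    UpReach G π v q.1 ∧ UpReach G π v q.2}.ncard

/-- The rank sequence of a walk: for each edge, the minimum of the ranks of its
endpoints, sorted in decreasing order. -/
def rankSeq {H : SimpleGraph V} (r : V → ℕ) {s t : V} (p : H.Walk s t) : List ℕ :=
  (p.darts.map (fun d => min (r d.toProd.1) (r d.toProd.2))).insertionSort (· ≥ ·)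

/-- Directed length of a walk in `G*π` under a pair of directed metrics `(mu, md)`:
each edge traversed from lower rank to higher rank costs its upward weight,
each edge traversed from higher rank to lower rank costs its downward weight. -/
noncomputable def dlen {H : SimpleGraph V} (r : V → ℕ) (mu md : V → V → ℝ≥0∞)
    {s t : V} (p : H.Walk s t) : ℝ≥0∞ :=
  (p.darts.map (fun d =>
    if r d.toProd.1 < r d.toProd.2 then mu d.toProd.1 d.toProd.2
    else md d.toProd.2 d.toProd.1)).sum

/-- Length of a directed walk `s :: l` under arc weights `wD`. -/
noncomputable def dWalkLen (wD : V → V → ℝ≥0∞) : V → List V → ℝ≥0∞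
  | _, [] => 0
  | s, x :: l => wD s x + dWalkLen wD x l

/-- Shortest directed path distance in the directed graph `D` under arc weights `wD`. -/
noncomputable def ddist (D : V → V → Prop) (wD : V → V → ℝ≥0∞) (s t : V) : ℝ≥0∞ :=
  ⨅ (l : List V) (_ : List.Chain D s l ∧ l.getLastD s = t), dWalkLen wD s l


-- ===== auxiliary lemmas =====
section Aux
variable {V : Type*}

-- basics
private lemma le_chList (H : SimpleGraph V) (l : List V) : H ≤ chList H l := by
  cases l with
  | nil => exact le_rfl
  | cons v l => rw [chList]; exact le_sup_left

private lemma chList_noedge {H : SimpleGraph V} {c : V} (h : ∀ a, ¬ H.Adj c a) :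
    ∀ (l : List V) (H : SimpleGraph V), (∀ a, ¬ H.Adj c a) → ∀ a, ¬ (chList H l).Adj c a := by
  intro l
  induction l with
  | nil => intro H hH a; exact hH a
  | cons v l ih =>
    intro H hH a hadj
    rw [chList, SimpleGraph.sup_adj] at hadj
    rcases hadj with h1 | h2
    · exact hH a h1
    · refine ih (chStep H v) ?_ a h2
      rintro b ⟨_, _, _, h4 | ⟨h5, h6⟩⟩
      · exact hH b h4
      · exact hH v h5.symm

private lemma chList_peel {H : SimpleGraph V} {v a b : V} {l : List V}
    (h : (chList H (v :: l)).Adj a b) (ha : a ≠ v) (hb : b ≠ v) :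
    (chList (chStep H v) l).Adj a b := by
  rw [chList, SimpleGraph.sup_adj] at h
  rcases h with h | h
  · exact le_chList _ _ ⟨h.ne, ha, hb, Or.inl h⟩
  · exact h

private lemma climb_list : ∀ (l₁ : List V) (H : SimpleGraph V) {l₂ : List V} {u c w : V},
    u ∉ l₁ → w ∉ l₁ → c ∉ l₁ → u ≠ c → w ≠ c → u ≠ w →
    (chList H (l₁ ++ c :: l₂)).Adj u c → (chList H (l₁ ++ c :: l₂)).Adj c w →
    (chList H (l₁ ++ c :: l₂)).Adj u w := by
  intro l₁
  induction l₁ with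
  | nil =>
    intro H l₂ u c w _ _ _ huc hwc huw h1 h2
    simp only [List.nil_append] at *
    rw [chList, SimpleGraph.sup_adj] at h1 h2 ⊢
    have hnc : ∀ a, ¬ (chStep H c).Adj c a := fun a h => h.2.1 rfl
    have h1' : H.Adj u c := by
      rcases h1 with h | h
      · exact h
      · exact absurd h.symm (chList_noedge hnc l₂ _ hnc u)
    have h2' : H.Adj c w := by
      rcases h2 with h | h
      · exact h
      · exact absurd h (chList_noedge hnc l₂ _ hnc w)
    right
    exact le_chList _ _ ⟨huw, huc, hwc, Or.inr ⟨h1'.symm, h2'⟩⟩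
  | cons v l₁ ih =>
    intro H l₂ u c w hu hw hc huc hwc huw h1 h2
    simp only [List.mem_cons, not_or] at hu hw hc
    simp only [List.cons_append] at h1 h2 ⊢
    rw [chList, SimpleGraph.sup_adj]
    right
    exact ih (chStep H v) hu.2 hw.2 hc.2 huc hwc huw
      (chList_peel h1 hu.1 hc.1) (chList_peel h2 hc.1 hw.1)

private lemma rk_lt {n : ℕ} (π : Fin n ≃ V) (v : V) : rk π v < n := (π.symm v).isLt

private lemma rk_inj {n : ℕ} (π : Fin n ≃ V) : Function.Injective (rk π) := by
  intro a b h
  have : π.symm a = π.symm b := Fin.ext h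
  exact π.symm.injective this

private lemma chGraph_climb {n : ℕ} {G : SimpleGraph V} {π : Fin n ≃ V} {u c w : V}
    (huc : (chGraph G π).Adj u c) (hcw : (chGraph G π).Adj c w)
    (h1 : rk π c < rk π u) (h2 : rk π c < rk π w) (huw : u ≠ w) :
    (chGraph G π).Adj u w := by
  set L := (List.finRange n).map ⇑π with hLdef
  have hlen : L.length = n := by simp [hLdef]
  set k := rk π c with hk
  have hkn : k < n := rk_lt π c
  have hkL : k < L.length := by rwa [hlen]
  have hgetL : ∀ (i : ℕ) (h : i < L.length), L[i] = π ⟨i, by rwa [hlen] at h⟩ := by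
    intro i h
    simp [hLdef, List.getElem_map, List.getElem_finRange, Fin.cast]
  have hLk : L[k] = c := by
    rw [hgetL k hkL]
    show π ⟨rk π c, _⟩ = c
    have : (⟨rk π c, hkn⟩ : Fin n) = π.symm c := by
      apply Fin.ext; rfl
    rw [this, Equiv.apply_symm_apply]
  have hdec : L = L.take k ++ c :: L.drop (k + 1) := by
    conv_lhs => rw [← List.take_append_drop k L]
    rw [List.drop_eq_getElem_cons hkL, hLk]
  have hmemtake : ∀ a ∈ L.take k, rk π a < k := by
    intro a ha
    obtain ⟨i, hi, hEq⟩ := List.getElem_of_mem ha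
    have hik : i < k := by
      have := hi; rw [List.length_take, hlen] at this; omega
    have hiL : i < L.length := by omega
    rw [List.getElem_take] at hEq
    rw [hgetL i hiL] at hEq
    have : rk π a = i := by
      rw [← hEq]; show ((π.symm (π _) : Fin n) : ℕ) = i; rw [Equiv.symm_apply_apply]
    omega
  have hu : u ∉ L.take k := fun h => absurd (hmemtake u h) (by omega)
  have hw' : w ∉ L.take k := fun h => absurd (hmemtake w h) (by omega)
  have hc : c ∉ L.take k := fun h => absurd (hmemtake c h) (by omega)
  have hune : u ≠ c := fun h => by subst h; omega
  have hwne : w ≠ c := fun h => by subst h; omega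
  show (chList G L).Adj u w
  rw [hdec]
  refine climb_list (L.take k) G hu hw' hc hune hwne huw ?_ ?_
  · rw [← hdec]; exact huc
  · rw [← hdec]; exact hcw

private lemma getLastD_append' : ∀ (l₁ l₂ : List V) (x : V),
    (l₁ ++ l₂).getLastD x = l₂.getLastD (l₁.getLastD x) := by
  intro l₁
  induction l₁ with
  | nil => intro l₂ x; rfl
  | cons a l₁ ih => intro l₂ x; rw [List.cons_append, List.getLastD_cons, ih, List.getLastD_cons]

private lemma chain_append' {R : V → V → Prop} : ∀ (l₁ : List V) (x : V) {l₂ : List V},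
    List.Chain R x l₁ → List.Chain R (l₁.getLastD x) l₂ → List.Chain R x (l₁ ++ l₂) := by
  intro l₁
  induction l₁ with
  | nil => intro x l₂ _ h; exact h
  | cons a l₁ ih =>
    intro x l₂ h1 h2
    simp only [List.Chain, List.chain_cons] at h1
    rw [List.getLastD_cons] at h2
    exact List.chain_cons.mpr ⟨h1.1, ih a h1.2 h2⟩

private lemma chain_reverse' {R : V → V → Prop} (hsymm : ∀ a b, R a b → R b a) :
    ∀ (l : List V) (a : V), List.Chain R a l →
    ∃ l', List.Chain R (l.getLastD a) l' ∧ l'.getLastD (l.getLastD a) = a ∧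
      (∀ u, u ∈ (l.getLastD a) :: l' ↔ u ∈ a :: l) := by
  intro l
  induction l with
  | nil => intro a _; exact ⟨[], List.Chain.nil, rfl, fun u => Iff.rfl⟩
  | cons w t ih =>
    intro a h
    simp only [List.Chain, List.chain_cons] at h
    obtain ⟨l'', hch, hlast, hmem⟩ := ih w h.2
    rw [List.getLastD_cons]
    refine ⟨l'' ++ [a], ?_, ?_, ?_⟩
    · refine chain_append' l'' _ hch ?_
      rw [hlast]
      exact List.chain_cons.mpr ⟨hsymm a w h.1, List.Chain.nil⟩
    · rw [getLastD_append']; rfl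
    · intro u
      constructor
      · intro hu
        rcases List.mem_cons.mp hu with h1 | h1
        · have := (hmem u).mp (by rw [h1]; exact List.mem_cons_self)
          rcases List.mem_cons.mp this with h2 | h2
          · exact List.mem_cons.mpr (Or.inr (by rw [h2]; exact List.mem_cons_self))
          · exact List.mem_cons.mpr (Or.inr (List.mem_cons.mpr (Or.inr h2)))
        · rcases List.mem_append.mp h1 with h2 | h2
          · have := (hmem u).mp (List.mem_cons.mpr (Or.inr h2))
            rcases List.mem_cons.mp this with h3 | h3
            · exact List.mem_cons.mpr (Or.inr (by rw [h3]; exact List.mem_cons_self))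
            · exact List.mem_cons.mpr (Or.inr (List.mem_cons.mpr (Or.inr h3)))
          · simp at h2; rw [h2]; exact List.mem_cons_self
      · intro hu
        rcases List.mem_cons.mp hu with h1 | h1
        · rw [h1]; exact List.mem_cons.mpr (Or.inr (List.mem_append.mpr (Or.inr (by simp))))
        · have := (hmem u).mpr h1
          rcases List.mem_cons.mp this with h2 | h2
          · exact List.mem_cons.mpr (Or.inl h2)
          · exact List.mem_cons.mpr (Or.inr (List.mem_append.mpr (Or.inl h2)))

private lemma chain_prefix {R : V → V → Prop} : ∀ (l : List V) (a : V), List.Chain R a l →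
    ∀ u ∈ a :: l, ∃ l₀, List.Chain R a l₀ ∧ l₀.getLastD a = u ∧ ∀ v ∈ a :: l₀, v ∈ a :: l := by
  intro l
  induction l with
  | nil =>
    intro a _ u hu
    simp at hu
    exact ⟨[], List.Chain.nil, hu.symm, fun v hv => hv⟩
  | cons w t ih =>
    intro a h u hu
    simp only [List.Chain, List.chain_cons] at h
    rcases List.mem_cons.mp hu with h1 | h1
    · exact ⟨[], List.Chain.nil, h1.symm, fun v hv => by
        simp at hv; rw [hv]; exact List.mem_cons_self⟩
    · obtain ⟨l₀, hch, hlast, hmem⟩ := ih w h.2 u h1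
      refine ⟨w :: l₀, List.chain_cons.mpr ⟨h.1, hch⟩, by rw [List.getLastD_cons]; exact hlast, ?_⟩
      intro v hv
      rcases List.mem_cons.mp hv with h2 | h2
      · rw [h2]; exact List.mem_cons_self
      · exact List.mem_cons.mpr (Or.inr (hmem v h2))

section Reach
variable {Γ : SimpleGraph V} {r : V → ℕ}

private lemma chain_upreach :
    ∀ (l : List V) (a : V), List.Chain Γ.Adj a l →
    List.Chain' (fun x y => r x < r y) (a :: l) →
    Relation.ReflTransGen (fun x y => Γ.Adj x y ∧ r x < r y) a (l.getLastD a) := by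
  intro l
  induction l with
  | nil => intro a _ _; exact Relation.ReflTransGen.refl
  | cons w t ih =>
    intro a hch hinc
    simp only [List.Chain, List.chain_cons] at hch
    simp only [List.Chain', List.isChain_cons_cons] at hinc
    rw [List.getLastD_cons]
    exact Relation.ReflTransGen.head ⟨hch.1, hinc.1⟩ (ih w hch.2 hinc.2)

variable (hclimb : ∀ u c w, Γ.Adj u c → Γ.Adj c w → r c < r u → r c < r w → u ≠ w → Γ.Adj u w)
    (hinj : Function.Injective r)

include hclimb hinj in
private lemma valley :
    ∀ (l : List V) (a : V), List.Chain Γ.Adj a l →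
      (∀ u ∈ a :: l, r u ≤ r (l.getLastD a)) →
      List.Chain' (fun x y => r x < r y) (a :: l) ∨
      ∃ l' : List V, l'.length < l.length ∧ List.Chain Γ.Adj a l' ∧
        l'.getLastD a = l.getLastD a ∧ ∀ u ∈ a :: l', u ∈ a :: l := by
  intro l
  induction l with
  | nil => intro a _ _; left; exact List.isChain_singleton _
  | cons w t ih =>
    intro a hch hbd
    simp only [List.Chain, List.chain_cons] at hch
    obtain ⟨haw, hch'⟩ := hch
    have hne : a ≠ w := haw.ne
    have hrne : r a ≠ r w := fun h => hne (hinj h)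
    rcases lt_or_gt_of_ne hrne with hlt | hgt
    · -- increasing first step
      rcases ih w hch' (by
          intro u hu
          rw [List.getLastD_cons] at hbd
          exact hbd u (List.mem_cons.mpr (Or.inr hu))) with hinc | ⟨t', hlen, hcht, hlast, hmem⟩
      · left; exact List.isChain_cons_cons.mpr ⟨hlt, hinc⟩
      · right
        refine ⟨w :: t', by simpa using hlen, List.chain_cons.mpr ⟨haw, hcht⟩, ?_, ?_⟩
        · rw [List.getLastD_cons, List.getLastD_cons]; exact hlast
        · intro u hu
          rcases List.mem_cons.mp hu with h1 | h1
          · rw [h1]; exact List.mem_cons_self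
          · exact List.mem_cons.mpr (Or.inr (hmem u h1))
    · -- descending first step: r w < r a
      cases t with
      | nil =>
        exfalso
        have := hbd a (List.mem_cons_self)
        simp [List.getLastD_cons] at this
        omega
      | cons w2 t2 =>
        simp only [List.Chain, List.chain_cons] at hch'
        obtain ⟨hww2, hch2⟩ := hch'
        have hne2 : w ≠ w2 := hww2.ne
        have hrne2 : r w ≠ r w2 := fun h => hne2 (hinj h)
        rcases lt_or_gt_of_ne hrne2 with hlt2 | hgt2
        · -- valley at w
          right
          by_cases haw2 : a = w2
          · refine ⟨t2, by simp, ?_, ?_, ?_⟩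
            · rw [haw2]; exact hch2
            · rw [List.getLastD_cons, List.getLastD_cons, haw2]
            · intro u hu
              rcases List.mem_cons.mp hu with h1 | h1
              · rw [h1]; exact List.mem_cons_self
              · simp [List.mem_cons.mpr]; tauto
          · have hadj : Γ.Adj a w2 := hclimb a w w2 haw hww2 hgt hlt2 haw2
            refine ⟨w2 :: t2, by simp, List.chain_cons.mpr ⟨hadj, hch2⟩, ?_, ?_⟩
            · rw [List.getLastD_cons, List.getLastD_cons, List.getLastD_cons]
            · intro u hu
              rcases List.mem_cons.mp hu with h1 | h1
              · rw [h1]; exact List.mem_cons_self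
              · exact List.mem_cons.mpr (Or.inr (List.mem_cons.mpr (Or.inr h1)))
        · -- still descending: recurse on (w, w2::t2)
          rcases ih w (List.chain_cons.mpr ⟨hww2, hch2⟩) (by
              intro u hu
              rw [List.getLastD_cons] at hbd
              exact hbd u (List.mem_cons.mpr (Or.inr hu))) with hinc | ⟨t', hlen, hcht, hlast, hmem⟩
          · exfalso
            simp only [List.Chain', List.isChain_cons_cons] at hinc
            omega
          · right
            refine ⟨w :: t', by simpa using hlen, List.chain_cons.mpr ⟨haw, hcht⟩, ?_, ?_⟩
            · rw [List.getLastD_cons, List.getLastD_cons]; exact hlast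
            · intro u hu
              rcases List.mem_cons.mp hu with h1 | h1
              · rw [h1]; exact List.mem_cons_self
              · exact List.mem_cons.mpr (Or.inr (hmem u h1))

include hclimb hinj in
private lemma reach_main :
    ∀ (N : ℕ) (l : List V) (a : V), l.length ≤ N → List.Chain Γ.Adj a l →
      (∀ u ∈ a :: l, r u ≤ r (l.getLastD a)) →
      Relation.ReflTransGen (fun x y => Γ.Adj x y ∧ r x < r y) a (l.getLastD a) := by
  intro N
  induction N with
  | zero =>
    intro l a hlen _ _
    have : l = [] := List.length_eq_zero_iff.mp (Nat.le_zero.mp hlen)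
    subst this
    exact Relation.ReflTransGen.refl
  | succ N ihN =>
    intro l a hlen hch hbd
    rcases valley hclimb hinj l a hch hbd with hinc | ⟨l', hl', hch', hlast', hmem'⟩
    · exact chain_upreach l a hch hinc
    · rw [← hlast']
      refine ihN l' a (by omega) hch' ?_
      intro u hu
      rw [hlast']
      exact hbd u (hmem' u hu)

end Reach

open scoped Classical in
private lemma packing {α : Type*} [DecidableEq α] (A₀ : Finset α) (R : α → α → Prop)
    (n : ℕ) (hn : 1 ≤ n)
    (hsmall : ∀ b ∈ A₀, 3 * (A₀.filter (fun c => R b c)).card ≤ n - 1)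
    (hrefl : ∀ b ∈ A₀, R b b) (htrans : ∀ a b c, R a b → R b c → R a c) :
    ∃ A ⊆ A₀, 3 * A.card ≤ 2 * n ∧ (A = A₀ ∨ n ≤ 3 * A.card) ∧
      ∀ a ∈ A, ∀ b ∈ A₀, R a b → b ∈ A := by
  classical
  set P : Finset α → Prop := fun A =>
    (∀ a ∈ A, ∀ b ∈ A₀, R a b → b ∈ A) ∧ 3 * A.card ≤ 2 * n - 2 with hP
  set cand := A₀.powerset.filter P with hcand
  have hne : cand.Nonempty := by
    refine ⟨∅, ?_⟩
    rw [hcand, Finset.mem_filter, Finset.mem_powerset]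
    exact ⟨Finset.empty_subset _, fun a ha => absurd ha (Finset.notMem_empty a), by simp⟩
  obtain ⟨A, hA, hAmax⟩ := Finset.exists_max_image cand Finset.card hne
  rw [hcand, Finset.mem_filter, Finset.mem_powerset] at hA
  obtain ⟨hA0, hAclosed, hAcard⟩ := hA
  refine ⟨A, hA0, by omega, ?_, hAclosed⟩
  by_contra hcon
  push_neg at hcon
  obtain ⟨hne', hlt⟩ := hcon
  have hssub : A ⊂ A₀ := Finset.ssubset_iff_subset_ne.mpr ⟨hA0, hne'⟩
  obtain ⟨b, hbA0, hbA⟩ := Finset.exists_of_ssubset hssub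
  set K := A₀.filter (fun c => R b c) with hK
  have hbK : b ∈ K := Finset.mem_filter.mpr ⟨hbA0, hrefl b hbA0⟩
  have hKcard : 3 * K.card ≤ n - 1 := hsmall b hbA0
  have hAK : A ∪ K ∈ cand := by
    rw [hcand, Finset.mem_filter, Finset.mem_powerset]
    refine ⟨Finset.union_subset hA0 (Finset.filter_subset _ _), ?_, ?_⟩
    · intro a ha d hd hR
      rcases Finset.mem_union.mp ha with h1 | h1
      · exact Finset.mem_union_left _ (hAclosed a h1 d hd hR)
      · refine Finset.mem_union_right _ (Finset.mem_filter.mpr ⟨hd, ?_⟩)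
        exact htrans b a d (Finset.mem_filter.mp h1).2 hR
    · have := Finset.card_union_le A K
      omega
  have hlt2 : A.card < (A ∪ K).card := by
    refine Finset.card_lt_card (Finset.ssubset_iff_subset_ne.mpr ⟨Finset.subset_union_left, ?_⟩)
    intro h
    exact hbA (h ▸ Finset.mem_union_right _ hbK)
  exact absurd (hAmax _ hAK) (by omega)


private lemma getLastD_of_ne_nil : ∀ (l : List V) (h : l ≠ []) (d : V), l.getLastD d = l.getLast h := by
  intro l
  induction l with
  | nil => intro h; exact absurd rfl h
  | cons a l ih =>
    intro h d
    cases l with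
    | nil => rfl
    | cons b t =>
      rw [List.getLastD_cons, List.getLast_cons (by simp), ih (by simp) a]

private lemma upreach_rk_le {n : ℕ} {G : SimpleGraph V} {π : Fin n ≃ V} {a b : V}
    (h : UpReach G π a b) : rk π a ≤ rk π b := by
  induction h with
  | refl => exact le_rfl
  | tail h1 h2 ih => exact le_trans ih (le_of_lt h2.2)

private lemma nbr_aux {n : ℕ} {G : SimpleGraph V} {π : Fin n ≃ V} {x b : V} :
    ∀ {w : V}, UpReach G π w x → (chGraph G π).Adj w b → rk π w < rk π b →
    UpReach G π b x ∨ ((chGraph G π).Adj x b ∧ rk π x < rk π b) := by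
  intro w hw
  have hw' : Relation.ReflTransGen
      (fun a b => (chGraph G π).Adj a b ∧ rk π a < rk π b) w x := hw
  clear hw
  induction hw' using Relation.ReflTransGen.head_induction_on with
  | refl => exact fun hadj hlt => Or.inr ⟨hadj, hlt⟩
  | head h' hcx ih =>
    intro hadj hlt
    rename_i a c
    by_cases hbc : b = c
    · subst hbc; exact Or.inl hcx
    · have hbc' : (chGraph G π).Adj b c := chGraph_climb hadj.symm h'.1 hlt h'.2 hbc
      rcases lt_trichotomy (rk π b) (rk π c) with h1 | h1 | h1
      · exact Or.inl (Relation.ReflTransGen.head ⟨hbc', h1⟩ hcx)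
      · exact absurd (rk_inj π h1) hbc
      · exact ih hbc'.symm h1

private lemma nbr {n : ℕ} {G : SimpleGraph V} {π : Fin n ≃ V} {x w b : V}
    (hw : UpReach G π w x) (hadj : (chGraph G π).Adj w b) :
    UpReach G π b x ∨ ((chGraph G π).Adj x b ∧ rk π x < rk π b) := by
  rcases lt_trichotomy (rk π b) (rk π w) with hlt | heq | hgt
  · exact Or.inl (Relation.ReflTransGen.head ⟨hadj.symm, hlt⟩ hw)
  · exact absurd (rk_inj π heq) hadj.symm.ne
  · exact nbr_aux hw hadj hgt

end Aux
-- ===== end auxiliary lemmas =====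

/-- If `S` is a minimum balanced separator of the connected graph `G`,
then for every contraction order `π` there is a clique `C` of `G*π` with at least
`|S|` vertices and a set `W` of at least `n / 3` vertices such that for every
`v ∈ W` every vertex of `C` lies in the search space `SS v` of `G^∧π`. -/
theorem stmt2 {V : Type*} [Fintype V] [DecidableEq V] {n : ℕ}
    (G : SimpleGraph V) (hG : G.Connected) (π : Fin n ≃ V)
    (S : Finset V) (hS : IsBalancedSepOn G Finset.univ S)
    (hmin : ∀ S' : Finset V, IsBalancedSepOn G Finset.univ S' → S.card ≤ S'.card) :
    ∃ C W : Finset V, S.card ≤ C.card ∧ n ≤ 3 * W.card ∧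
      (chGraph G π).IsClique (C : Set V) ∧
      ∀ v ∈ W, ∀ x ∈ C, UpReach G π v x := by
  classical
  have hcard : Fintype.card V = n := by
    rw [Fintype.card_congr π.symm, Fintype.card_fin]
  have hn1 : 1 ≤ n := by
    have : 0 < Fintype.card V := Fintype.card_pos_iff.mpr hG.nonempty
    omega
  have hclimbI : ∀ u c w, (chGraph G π).Adj u c → (chGraph G π).Adj c w →
      rk π c < rk π u → rk π c < rk π w → u ≠ w → (chGraph G π).Adj u w :=
    fun u c w h1 h2 h3 h4 h5 => chGraph_climb h1 h2 h3 h4 h5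
  have hinjI : Function.Injective (rk π) := rk_inj π
  have hGle : G ≤ chGraph G π := le_chList G _
  have hreach : ∀ (a : V) (l : List V), List.Chain G.Adj a l →
      (∀ u ∈ a :: l, rk π u ≤ rk π (l.getLastD a)) → UpReach G π a (l.getLastD a) := by
    intro a l hch hbd
    exact reach_main hclimbI hinjI l.length l a le_rfl
      (List.Chain.imp (fun x y h => hGle h) hch) hbd
  -- every vertex reaches the top vertex
  set T : V := π ⟨n - 1, by omega⟩ with hTdef
  have hrkT : rk π T = n - 1 := by
    rw [hTdef]
    show ((π.symm (π _) : Fin n) : ℕ) = n - 1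
    rw [Equiv.symm_apply_apply]
  have hbdT : ∀ u : V, rk π u ≤ rk π T := by
    intro u; have := rk_lt π u; omega
  have hT : ∀ w : V, UpReach G π w T := by
    intro w
    by_cases hwT : w = T
    · rw [hwT]; exact Relation.ReflTransGen.refl
    · obtain ⟨p⟩ := hG.preconnected w T
      cases p with
      | nil => exact absurd rfl hwT
      | @cons _ v _ h q =>
        have hch := SimpleGraph.Walk.isChain_adj_cons_support h q
        have hlast : q.support.getLastD w = T := by
          rw [getLastD_of_ne_nil q.support q.support_ne_nil w]
          exact SimpleGraph.Walk.getLast_support q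
        have := hreach w q.support hch (by intro u _; rw [hlast]; exact hbdT u)
        rwa [hlast] at this
  -- choose x of minimum rank with big reach-in set
  set Wof : V → Finset V := fun u => Finset.univ.filter (fun w => UpReach G π w u) with hWof
  have hWTuniv : Wof T = Finset.univ := by
    apply Finset.eq_univ_of_forall
    intro w
    rw [hWof]
    exact Finset.mem_filter.mpr ⟨Finset.mem_univ _, hT w⟩
  set cand := Finset.univ.filter (fun v : V => n ≤ 3 * (Wof v).card) with hcand
  have hcandne : cand.Nonempty := by
    refine ⟨T, Finset.mem_filter.mpr ⟨Finset.mem_univ _, ?_⟩⟩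
    rw [hWTuniv, Finset.card_univ, hcard]; omega
  obtain ⟨x, hxc, hxmin⟩ := Finset.exists_min_image cand (rk π) hcandne
  have hxW : n ≤ 3 * (Wof x).card := (Finset.mem_filter.mp hxc).2
  have hminr : ∀ v : V, rk π v < rk π x → 3 * (Wof v).card < n := by
    intro v hv
    by_contra hcon
    push_neg at hcon
    have : v ∈ cand := Finset.mem_filter.mpr ⟨Finset.mem_univ _, hcon⟩
    exact absurd (hxmin v this) (by omega)
  set W := Wof x with hW
  have hmemW : ∀ w, w ∈ W ↔ UpReach G π w x := by
    intro w; rw [hW, hWof]; simp only [Finset.mem_filter, Finset.mem_univ, true_and]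
  have hxW' : x ∈ W := (hmemW x).mpr Relation.ReflTransGen.refl
  set Np := Finset.univ.filter (fun u => (chGraph G π).Adj x u ∧ rk π x < rk π u) with hNp
  set C := insert x Np with hC
  have hmemC : ∀ u, u ∈ C ↔ (u = x ∨ ((chGraph G π).Adj x u ∧ rk π x < rk π u)) := by
    intro u
    rw [hC, Finset.mem_insert, hNp]
    simp only [Finset.mem_filter, Finset.mem_univ, true_and]
  have hWC : ∀ u ∈ W, u ∈ C → u = x := by
    intro u hu huC
    rcases (hmemC u).mp huC with h | h
    · exact h
    · exfalso; have := upreach_rk_le ((hmemW u).mp hu); omega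
  -- the clique property
  have hclique : (chGraph G π).IsClique (C : Set V) := by
    intro u hu w hw hne
    have hu' := (hmemC u).mp (Finset.mem_coe.mp hu)
    have hw' := (hmemC w).mp (Finset.mem_coe.mp hw)
    rcases hu' with h1 | h1 <;> rcases hw' with h2 | h2
    · exact absurd (h1.trans h2.symm) hne
    · rw [h1]; exact h2.1
    · rw [h2]; exact h1.1.symm
    · exact hclimbI u x w h1.1.symm h2.1 h1.2 h2.2 hne
  -- the reach property
  have hreachC : ∀ v ∈ W, ∀ c ∈ C, UpReach G π v c := by
    intro v hv c hc
    have hvx := (hmemW v).mp hv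
    rcases (hmemC c).mp hc with h | h
    · rw [h]; exact hvx
    · exact Relation.ReflTransGen.tail hvx ⟨h.1, h.2⟩
  -- the balanced separator property
  have hbal : IsBalancedSepOn G Finset.univ C := by
    set A₀ := W.erase x with hA₀
    have hA₀sub : A₀ ⊆ W := Finset.erase_subset _ _
    have hmemA₀ : ∀ u, u ∈ A₀ ↔ (u ≠ x ∧ u ∈ W) := fun u => Finset.mem_erase
    set R : V → V → Prop := fun a b => ∃ l : List V,
      List.Chain G.Adj a l ∧ (∀ u ∈ a :: l, u ∈ A₀) ∧ l.getLastD a = b with hR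
    have hrefl : ∀ b ∈ A₀, R b b := by
      intro b hb
      refine ⟨[], List.Chain.nil, ?_, rfl⟩
      intro u hu; simp only [List.mem_singleton] at hu; rwa [hu]
    have htrans : ∀ a b c, R a b → R b c → R a c := by
      rintro a b c ⟨l₁, h1, m1, e1⟩ ⟨l₂, h2, m2, e2⟩
      refine ⟨l₁ ++ l₂, chain_append' l₁ a h1 (by rwa [e1]), ?_, by rw [getLastD_append', e1, e2]⟩
      intro u hu
      rcases List.mem_cons.mp hu with h | h
      · exact m1 u (by rw [h]; exact List.mem_cons_self)
      · rcases List.mem_append.mp h with h | h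
        · exact m1 u (List.mem_cons.mpr (Or.inr h))
        · exact m2 u (List.mem_cons.mpr (Or.inr h))
    have hsmall : ∀ b ∈ A₀, 3 * (A₀.filter (fun c => R b c)).card ≤ n - 1 := by
      intro b hb
      set K := A₀.filter (fun c => R b c) with hK
      have hbK : b ∈ K := Finset.mem_filter.mpr ⟨hb, hrefl b hb⟩
      obtain ⟨y, hyK, hymax⟩ := Finset.exists_max_image K (rk π) ⟨b, hbK⟩
      have hchainK : ∀ (l : List V), List.Chain G.Adj b l → (∀ u ∈ b :: l, u ∈ A₀) →
          ∀ u ∈ b :: l, u ∈ K := by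
        intro l hch hm u hu
        obtain ⟨l₀, hch₀, hlast₀, hmem₀⟩ := chain_prefix l b hch u hu
        exact Finset.mem_filter.mpr ⟨hm u hu, ⟨l₀, hch₀, fun v hv => hm v (hmem₀ v hv), hlast₀⟩⟩
      have hKW : K ⊆ Wof y := by
        intro c hcK
        obtain ⟨hcA₀, hRbc⟩ := Finset.mem_filter.mp hcK
        obtain ⟨l₁, hch₁, hm₁, he₁⟩ := hRbc
        obtain ⟨hyA₀, hRby⟩ := Finset.mem_filter.mp hyK
        obtain ⟨l₂, hch₂, hm₂, he₂⟩ := hRby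
        obtain ⟨l₁', hch₁', hlast₁', hmem₁'⟩ :=
          chain_reverse' (fun a b (h : G.Adj a b) => h.symm) l₁ b hch₁
        rw [he₁] at hch₁' hlast₁' hmem₁'
        have hch₃ : List.Chain G.Adj c (l₁' ++ l₂) := chain_append' l₁' c hch₁' (by rwa [hlast₁'])
        have hlast₃ : (l₁' ++ l₂).getLastD c = y := by rw [getLastD_append', hlast₁', he₂]
        have hmemK : ∀ u ∈ c :: (l₁' ++ l₂), u ∈ K := by
          intro u hu
          rcases List.mem_cons.mp hu with h | h
          · rw [h]; exact hcK
          · rcases List.mem_append.mp h with h | h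
            · have : u ∈ b :: l₁ := (hmem₁' u).mp (List.mem_cons.mpr (Or.inr h))
              exact hchainK l₁ hch₁ hm₁ u this
            · exact hchainK l₂ hch₂ hm₂ u (List.mem_cons.mpr (Or.inr h))
        have hup : UpReach G π c y := by
          have := hreach c (l₁' ++ l₂) hch₃ (by
            intro u hu; rw [hlast₃]; exact hymax u (hmemK u hu))
          rwa [hlast₃] at this
        rw [hWof]
        exact Finset.mem_filter.mpr ⟨Finset.mem_univ _, hup⟩
      have hylt : rk π y < rk π x := by
        have h1 := (hmemA₀ y).mp (Finset.filter_subset _ _ hyK)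
        have h2 := upreach_rk_le ((hmemW y).mp h1.2)
        have h3 : rk π y ≠ rk π x := fun h => h1.1 (hinjI h)
        omega
      have h4 := hminr y hylt
      have hle := Finset.card_le_card hKW
      omega
    obtain ⟨A, hAsub, hA2n, hAdich, hAcl⟩ := packing A₀ R n hn1 hsmall hrefl htrans
    set B := (A₀ \ A) ∪ (Finset.univ \ (W ∪ C)) with hB
    have hAW : ∀ a ∈ A, a ∈ W := fun a ha => hA₀sub (hAsub ha)
    have hAnotC : ∀ a ∈ A₀, a ∉ C := by
      intro a ha hc
      exact ((hmemA₀ a).mp ha).1 (hWC a (hA₀sub ha) hc)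
    refine ⟨Finset.subset_univ _, A, B, Finset.subset_univ _, Finset.subset_univ _,
      ?_, ?_, ?_, ?_, ?_, ?_, ?_⟩
    · rw [Finset.disjoint_left]
      intro a ha hb
      rcases Finset.mem_union.mp hb with h | h
      · exact (Finset.mem_sdiff.mp h).2 ha
      · exact (Finset.mem_sdiff.mp h).2 (Finset.mem_union_left _ (hAW a ha))
    · rw [Finset.disjoint_left]
      intro a ha hc
      exact hAnotC a (hAsub ha) hc
    · rw [Finset.disjoint_left]
      intro b hb hc
      rcases Finset.mem_union.mp hb with h | h
      · exact hAnotC b (Finset.mem_sdiff.mp h).1 hc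
      · exact (Finset.mem_sdiff.mp h).2 (Finset.mem_union_right _ hc)
    · apply Finset.eq_univ_of_forall
      intro v
      by_cases hvC : v ∈ C
      · exact Finset.mem_union_right _ hvC
      by_cases hvW : v ∈ W
      · have hvx : v ≠ x := fun h => hvC (by rw [h, hC]; exact Finset.mem_insert_self _ _)
        have hvA₀ : v ∈ A₀ := (hmemA₀ v).mpr ⟨hvx, hvW⟩
        by_cases hvA : v ∈ A
        · exact Finset.mem_union_left _ (Finset.mem_union_left _ hvA)
        · exact Finset.mem_union_left _ (Finset.mem_union_right _
            (Finset.mem_union_left _ (Finset.mem_sdiff.mpr ⟨hvA₀, hvA⟩)))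
      · refine Finset.mem_union_left _ (Finset.mem_union_right _
          (Finset.mem_union_right _ (Finset.mem_sdiff.mpr ⟨Finset.mem_univ _, ?_⟩)))
        intro h
        exact (Finset.mem_union.mp h).elim hvW hvC
    · intro a ha b hb hadj
      rcases Finset.mem_union.mp hb with h | h
      · obtain ⟨hbA₀, hbA⟩ := Finset.mem_sdiff.mp h
        have hRab : R a b := by
          refine ⟨[b], List.Chain.cons hadj List.Chain.nil, ?_, rfl⟩
          intro u hu
          rcases List.mem_cons.mp hu with h1 | h1
          · rw [h1]; exact hAsub ha
          · simp only [List.mem_singleton] at h1; rw [h1]; exact hbA₀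
        exact hbA (hAcl a ha b hbA₀ hRab)
      · obtain ⟨-, hbno⟩ := Finset.mem_sdiff.mp h
        have hax : UpReach G π a x := (hmemW a).mp (hAW a ha)
        rcases nbr hax (hGle hadj) with h1 | h1
        · exact hbno (Finset.mem_union_left _ ((hmemW b).mpr h1))
        · exact hbno (Finset.mem_union_right _ ((hmemC b).mpr (Or.inr h1)))
    · rw [Finset.card_univ, hcard]; omega
    · rw [Finset.card_univ, hcard]
      have hdisj : Disjoint (A₀ \ A) (Finset.univ \ (W ∪ C)) := by
        rw [Finset.disjoint_left]
        intro v hv hv2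
        exact (Finset.mem_sdiff.mp hv2).2
          (Finset.mem_union_left _ (hA₀sub (Finset.mem_sdiff.mp hv).1))
      rw [hB, Finset.card_union_of_disjoint hdisj]
      have h1 : (A₀ \ A).card = A₀.card - A.card := Finset.card_sdiff_of_subset hAsub
      have h2 : A₀.card = W.card - 1 := by rw [hA₀, Finset.card_erase_of_mem hxW']
      have h3 : (Finset.univ \ (W ∪ C)).card ≤ n - W.card := by
        calc (Finset.univ \ (W ∪ C)).card ≤ (Finset.univ \ W).card := by
              apply Finset.card_le_card
              exact Finset.sdiff_subset_sdiff (le_refl _) Finset.subset_union_left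
          _ = n - W.card := by
              rw [Finset.card_sdiff_of_subset (Finset.subset_univ _), Finset.card_univ, hcard]
      have h4 : A.card ≤ A₀.card := Finset.card_le_card hAsub
      have h5 : W.card ≤ n := by
        rw [← hcard, ← Finset.card_univ]
        exact Finset.card_le_card (Finset.subset_univ _)
      have h6 : 1 ≤ W.card := Finset.card_pos.mpr ⟨x, hxW'⟩
      rcases hAdich with h | h
      · have h7 : A₀ \ A = ∅ := by rw [h, Finset.sdiff_self]
        rw [h7, Finset.card_empty]
        omega
      · omega
  exact ⟨C, W, hmin C hbal, hxW, hclique, hreachC⟩
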